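/- Let K be a compact convex set with dim K = 2 (e.g., a planar state space), and let W : □_2 → V(K)⁺ be an affine map that is not entanglement breaking. Then W is extremal in the cone of positive affine maps A(□_2, V(K)⁺) if and only if all four vertex images w_{i,j} = W(s_{i,j}) generate extreme rays of V(K)⁺. -/

import Mathlib

def Square : Set ((Fin 2 → ℝ) × (Fin 2 → ℝ)) :=
  (stdSimplex ℝ (Fin 2)) ×ˢ (stdSimplex ℝ (Fin 2))

def sqVert (i j : Fin 2) : (Fin 2 → ℝ) × (Fin 2 → ℝ) := (Pi.single i 1, Pi.single j 1)

def coneOf {E : Type*} [AddCommGroup E] [Module ℝ E] (K : Set E) : Set E :=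
  {v | ∃ c : ℝ, 0 ≤ c ∧ ∃ x ∈ K, v = c • x}

def IsAffineOn {E V : Type*} [AddCommGroup E] [Module ℝ E] [AddCommGroup V] [Module ℝ V]
    (C : Set E) (f : E → V) : Prop :=
  ∀ x ∈ C, ∀ y ∈ C, ∀ a b : ℝ, 0 ≤ a → 0 ≤ b → a + b = 1 →
    f (a • x + b • y) = a • f x + b • f y

def ETBOn {E V : Type*} [AddCommGroup E] [Module ℝ E] [AddCommGroup V] [Module ℝ V]
    (C : Set E) (P : Set V) (T : E → V) : Prop :=
  ∃ (n : ℕ) (f : Fin n → E → ℝ) (φ : Fin n → V),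
    (∀ j, IsAffineOn C (f j)) ∧ (∀ j, ∀ x ∈ C, 0 ≤ f j x) ∧ (∀ j, φ j ∈ P) ∧
    ∀ x ∈ C, T x = ∑ j, f j x • φ j

/-- An element `v` of a cone `P` is extremal: `v ≠ 0` and any `v' ∈ P` with
`v − v' ∈ P` is a nonnegative multiple of `v`. -/
def ExtremalIn {V : Type*} [AddCommGroup V] [Module ℝ V] (P : Set V) (v : V) : Prop :=
  v ∈ P ∧ v ≠ 0 ∧ ∀ v' ∈ P, v - v' ∈ P → ∃ t : ℝ, 0 ≤ t ∧ v' = t • v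

/-- `W` is extremal in the cone of positive affine maps `□_2 → P` (ordered
pointwise by the cone `P`). -/
def ExtremalMap {E : Type*} [AddCommGroup E] [Module ℝ E]
    (P : Set E) (W : ((Fin 2 → ℝ) × (Fin 2 → ℝ)) → E) : Prop :=
  (¬ ∀ s ∈ Square, W s = 0) ∧
  ∀ W' : ((Fin 2 → ℝ) × (Fin 2 → ℝ)) → E, IsAffineOn Square W' →
    (∀ s ∈ Square, W' s ∈ P) → (∀ s ∈ Square, W s - W' s ∈ P) →
    ∃ t : ℝ, 0 ≤ t ∧ ∀ s ∈ Square, W' s = t • W s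

open Module Submodule

section Helpers

/-! ### basic simplex / square facts -/

lemma single_mem_stdSimplex' (i : Fin 2) : Pi.single i (1:ℝ) ∈ stdSimplex ℝ (Fin 2) := by
  constructor
  · intro x
    rcases eq_or_ne x i with h | h
    · subst h; simp
    · simp [Pi.single_apply, h]
  · simp [Pi.single_apply, Finset.sum_ite_eq']

lemma sqVert_mem (i j : Fin 2) : sqVert i j ∈ Square :=
  ⟨single_mem_stdSimplex' i, single_mem_stdSimplex' j⟩

lemma stdSimplex_coord_nonneg {x : Fin 2 → ℝ} (hx : x ∈ stdSimplex ℝ (Fin 2)) (i : Fin 2) :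
    0 ≤ x i := hx.1 i

lemma stdSimplex_sum {x : Fin 2 → ℝ} (hx : x ∈ stdSimplex ℝ (Fin 2)) : x 0 + x 1 = 1 := by
  have := hx.2
  rwa [Fin.sum_univ_two] at this

lemma stdSimplex_coord_le_one {x : Fin 2 → ℝ} (hx : x ∈ stdSimplex ℝ (Fin 2)) :
    x 1 ≤ 1 := by
  have h := stdSimplex_sum hx
  have := hx.1 0
  linarith

/-! ### cone facts -/

variable {E : Type*} [AddCommGroup E] [Module ℝ E] {K : Set E}

lemma coneOf_smul_mem {v : E} (hv : v ∈ coneOf K) {t : ℝ} (ht : 0 ≤ t) :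
    t • v ∈ coneOf K := by
  obtain ⟨c, hc, x, hx, rfl⟩ := hv
  exact ⟨t * c, mul_nonneg ht hc, x, hx, (mul_smul t c x).symm⟩

lemma coneOf_zero_mem {x : E} (hx : x ∈ K) : (0:E) ∈ coneOf K :=
  ⟨0, le_refl 0, x, hx, (zero_smul ℝ x).symm⟩

lemma coneOf_add_mem (hK : Convex ℝ K) {u v : E} (hu : u ∈ coneOf K) (hv : v ∈ coneOf K) :
    u + v ∈ coneOf K := by
  obtain ⟨c, hc, x, hx, rfl⟩ := hu
  obtain ⟨d, hd, y, hy, rfl⟩ := hv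
  rcases eq_or_lt_of_le (add_nonneg hc hd) with h0 | hpos
  · have hc0 : c = 0 := by linarith
    have hd0 : d = 0 := by linarith
    simpa [hc0, hd0] using coneOf_zero_mem hx
  · refine ⟨c + d, le_of_lt hpos, (c/(c+d)) • x + (d/(c+d)) • y, ?_, ?_⟩
    · exact hK hx hy (div_nonneg hc (le_of_lt hpos)) (div_nonneg hd (le_of_lt hpos))
        (by field_simp)
    · have h1 : (c + d) * (c / (c + d)) = c := by field_simp
      have h2 : (c + d) * (d / (c + d)) = d := by field_simp
      rw [smul_add, smul_smul, smul_smul, h1, h2]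

lemma coneOf_mem_span {v : E} (hv : v ∈ coneOf K) : v ∈ span ℝ K := by
  obtain ⟨c, _, x, hx, rfl⟩ := hv
  exact Submodule.smul_mem _ c (Submodule.subset_span hx)

/-! ### affine map facts -/

variable {F V : Type*} [AddCommGroup F] [Module ℝ F] [AddCommGroup V] [Module ℝ V]

lemma IsAffineOn.add {C : Set F} {f g : F → V} (hf : IsAffineOn C f) (hg : IsAffineOn C g) :
    IsAffineOn C (fun x => f x + g x) := by
  intro x hx y hy a b ha hb hab
  simp only [hf x hx y hy a b ha hb hab, hg x hx y hy a b ha hb hab, smul_add]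
  abel

lemma IsAffineOn.smul {C : Set F} {f : F → V} (hf : IsAffineOn C f) (c : ℝ) :
    IsAffineOn C (fun x => c • f x) := by
  intro x hx y hy a b ha hb hab
  dsimp only
  rw [hf x hx y hy a b ha hb hab, smul_add, smul_comm a c, smul_comm b c]

lemma IsAffineOn.sub {C : Set F} {f g : F → V} (hf : IsAffineOn C f) (hg : IsAffineOn C g) :
    IsAffineOn C (fun x => f x - g x) := by
  intro x hx y hy a b ha hb hab
  dsimp only
  rw [hf x hx y hy a b ha hb hab, hg x hx y hy a b ha hb hab, smul_sub, smul_sub]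
  abel

lemma IsAffineOn.comp_linear {C : Set F} {f : F → V} (hf : IsAffineOn C f)
    {V' : Type*} [AddCommGroup V'] [Module ℝ V'] (l : V →ₗ[ℝ] V') :
    IsAffineOn C (fun x => l (f x)) := by
  intro x hx y hy a b ha hb hab
  dsimp only
  rw [hf x hx y hy a b ha hb hab, map_add, map_smul, map_smul]

lemma isAffineOn_of_linear {C : Set F} (l : F →ₗ[ℝ] V) : IsAffineOn C l := by
  intro x _ y _ a b _ _ _
  rw [map_add, map_smul, map_smul]

lemma isAffineOn_const {C : Set F} (v : V) : IsAffineOn C (fun _ => v) := by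
  intro x _ y _ a b _ _ hab
  rw [← add_smul, hab, one_smul]

end Helpers
section FourVertex

lemma simplex_decomp {x : Fin 2 → ℝ} (hx : x ∈ stdSimplex ℝ (Fin 2)) :
    x = (1 - x 1) • (Pi.single 0 (1:ℝ) : Fin 2 → ℝ) + (x 1) • (Pi.single 1 (1:ℝ) : Fin 2 → ℝ) := by
  have h := stdSimplex_sum hx
  funext k
  fin_cases k <;> simp [Pi.single_apply] <;> linarith

lemma fourVertex {V : Type*} [AddCommGroup V] [Module ℝ V]
    {f : (Fin 2 → ℝ) × (Fin 2 → ℝ) → V}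
    (hf : IsAffineOn Square f) {s : (Fin 2 → ℝ) × (Fin 2 → ℝ)} (hs : s ∈ Square) :
    f s = ((1 - s.1 1) * (1 - s.2 1)) • f (sqVert 0 0)
        + ((1 - s.1 1) * s.2 1) • f (sqVert 0 1)
        + (s.1 1 * (1 - s.2 1)) • f (sqVert 1 0)
        + (s.1 1 * s.2 1) • f (sqVert 1 1) := by
  obtain ⟨h1, h2⟩ := hs
  have hu0 : 0 ≤ s.1 1 := h1.1 1
  have hu1 : s.1 1 ≤ 1 := stdSimplex_coord_le_one h1
  have hv0 : 0 ≤ s.2 1 := h2.1 1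
  have hv1 : s.2 1 ≤ 1 := stdSimplex_coord_le_one h2
  have hstep1 : s = (1 - s.1 1) • ((Pi.single 0 (1:ℝ) : Fin 2 → ℝ), s.2)
      + (s.1 1) • ((Pi.single 1 (1:ℝ) : Fin 2 → ℝ), s.2) := by
    apply Prod.ext
    · simpa using simplex_decomp h1
    · show s.2 = (1 - s.1 1) • s.2 + (s.1 1) • s.2
      rw [← add_smul]
      simp
  have hmem0 : ((Pi.single 0 (1:ℝ) : Fin 2 → ℝ), s.2) ∈ Square :=
    ⟨single_mem_stdSimplex' 0, h2⟩
  have hmem1 : ((Pi.single 1 (1:ℝ) : Fin 2 → ℝ), s.2) ∈ Square :=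
    ⟨single_mem_stdSimplex' 1, h2⟩
  have hstep2 : ∀ i : Fin 2, ((Pi.single i (1:ℝ) : Fin 2 → ℝ), s.2)
      = (1 - s.2 1) • sqVert i 0 + (s.2 1) • sqVert i 1 := by
    intro i
    apply Prod.ext
    · show (Pi.single i (1:ℝ) : Fin 2 → ℝ)
        = (1 - s.2 1) • (Pi.single i (1:ℝ) : Fin 2 → ℝ) + (s.2 1) • (Pi.single i (1:ℝ) : Fin 2 → ℝ)
      rw [← add_smul]
      simp
    · simpa [sqVert] using simplex_decomp h2
  have e1 : f s = (1 - s.1 1) • f ((Pi.single 0 (1:ℝ) : Fin 2 → ℝ), s.2)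
      + (s.1 1) • f ((Pi.single 1 (1:ℝ) : Fin 2 → ℝ), s.2) := by
    conv_lhs => rw [hstep1]
    exact hf _ hmem0 _ hmem1 _ _ (by linarith) hu0 (by ring)
  have e2 : ∀ i : Fin 2, f ((Pi.single i (1:ℝ) : Fin 2 → ℝ), s.2)
      = (1 - s.2 1) • f (sqVert i 0) + (s.2 1) • f (sqVert i 1) := by
    intro i
    conv_lhs => rw [hstep2 i]
    exact hf _ (sqVert_mem i 0) _ (sqVert_mem i 1) _ _ (by linarith) hv0 (by ring)
  rw [e1, e2 0, e2 1]
  module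

lemma vertex_relation {V : Type*} [AddCommGroup V] [Module ℝ V]
    {f : (Fin 2 → ℝ) × (Fin 2 → ℝ) → V} (hf : IsAffineOn Square f) :
    f (sqVert 0 0) + f (sqVert 1 1) = f (sqVert 0 1) + f (sqVert 1 0) := by
  have hpt : (2⁻¹:ℝ) • sqVert 0 0 + (2⁻¹:ℝ) • sqVert 1 1
      = (2⁻¹:ℝ) • sqVert 0 1 + (2⁻¹:ℝ) • sqVert 1 0 := by
    apply Prod.ext
    · rfl
    · show (2⁻¹:ℝ) • (Pi.single 0 (1:ℝ) : Fin 2 → ℝ) + (2⁻¹:ℝ) • (Pi.single 1 (1:ℝ) : Fin 2 → ℝ)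
        = (2⁻¹:ℝ) • (Pi.single 1 (1:ℝ) : Fin 2 → ℝ) + (2⁻¹:ℝ) • (Pi.single 0 (1:ℝ) : Fin 2 → ℝ)
      exact add_comm _ _
  have h1 := hf _ (sqVert_mem 0 0) _ (sqVert_mem 1 1) 2⁻¹ 2⁻¹
    (by norm_num) (by norm_num) (by norm_num)
  have h2 := hf _ (sqVert_mem 0 1) _ (sqVert_mem 1 0) 2⁻¹ 2⁻¹
    (by norm_num) (by norm_num) (by norm_num)
  rw [hpt] at h1
  have h3 := h1.symm.trans h2
  rw [← smul_add, ← smul_add] at h3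
  exact smul_right_injective V (by norm_num) h3

lemma mem_cone_of_vertices {E : Type*} [AddCommGroup E] [Module ℝ E] {K : Set E}
    (hK : Convex ℝ K) {g : (Fin 2 → ℝ) × (Fin 2 → ℝ) → E} (hg : IsAffineOn Square g)
    (hv : ∀ i j : Fin 2, g (sqVert i j) ∈ coneOf K) :
    ∀ s ∈ Square, g s ∈ coneOf K := by
  intro s hs
  have hu0 : 0 ≤ s.1 1 := hs.1.1 1
  have hu1 : s.1 1 ≤ 1 := stdSimplex_coord_le_one hs.1
  have hv0 : 0 ≤ s.2 1 := hs.2.1 1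
  have hv1 : s.2 1 ≤ 1 := stdSimplex_coord_le_one hs.2
  rw [fourVertex hg hs]
  refine coneOf_add_mem hK (coneOf_add_mem hK (coneOf_add_mem hK ?_ ?_) ?_) ?_ <;>
    exact coneOf_smul_mem (hv _ _) (by nlinarith)

lemma eq_on_square_of_vertices {V : Type*} [AddCommGroup V] [Module ℝ V]
    {f g : (Fin 2 → ℝ) × (Fin 2 → ℝ) → V}
    (hf : IsAffineOn Square f) (hg : IsAffineOn Square g)
    (h : ∀ i j : Fin 2, f (sqVert i j) = g (sqVert i j)) :
    ∀ s ∈ Square, f s = g s := by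
  intro s hs
  rw [fourVertex hf hs, fourVertex hg hs, h 0 0, h 0 1, h 1 0, h 1 1]

end FourVertex
section ETB

open Module Submodule

variable {E : Type*} [NormedAddCommGroup E] [NormedSpace ℝ E] [FiniteDimensional ℝ E]
variable {K : Set E}

lemma affine_interp {V : Type*} [AddCommGroup V] [Module ℝ V] (a g : V) (tk t1 t2 θ : ℝ)
    (h : θ * t1 + (1 - θ) * t2 = tk) :
    a + tk • g = θ • (a + t1 • g) + (1 - θ) • (a + t2 • g) := by
  match_scalars
  · ring
  · linarith

lemma epos_cone (e : E →L[ℝ] ℝ) (he : ∀ x ∈ K, 0 < e x) :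
    ∀ v ∈ coneOf K, v ≠ 0 → 0 < e v := by
  rintro v ⟨c, hc, x, hx, rfl⟩ hv
  have hc' : c ≠ 0 := by rintro rfl; simp at hv
  have : 0 < c := lt_of_le_of_ne hc (Ne.symm hc')
  simpa [map_smul, smul_eq_mul] using mul_pos this (he x hx)

lemma enonneg_cone (e : E →L[ℝ] ℝ) (he : ∀ x ∈ K, 0 < e x) :
    ∀ v ∈ coneOf K, 0 ≤ e v := by
  rintro v ⟨c, hc, x, hx, rfl⟩
  simpa [map_smul, smul_eq_mul] using mul_nonneg hc (le_of_lt (he x hx))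

/-- If the four vertex images span a subspace of dimension ≤ 2 (and some image is
nonzero), then all of them lie in a 2-generator subcone. -/
lemma flat_decomp (e : E →L[ℝ] ℝ) (he : ∀ x ∈ K, 0 < e x)
    (w : Fin 2 × Fin 2 → E) (hw : ∀ k, w k ∈ coneOf K)
    (k₀ : Fin 2 × Fin 2) (hk₀ : w k₀ ≠ 0)
    (hflat : finrank ℝ (span ℝ (Set.range w)) ≤ 2) :
    ∃ p q : E, p ∈ coneOf K ∧ q ∈ coneOf K ∧ p ≠ 0 ∧ q ≠ 0 ∧
      ∀ k, ∃ α β : ℝ, 0 ≤ α ∧ 0 ≤ β ∧ w k = α • p + β • q := by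
  classical
  have epos := epos_cone e he
  set S : Submodule ℝ E := span ℝ (Set.range w) with hS
  set n : Fin 2 × Fin 2 → E := fun k => (e (w k))⁻¹ • w k with hn
  have hwS : ∀ k, w k ∈ S := fun k => subset_span ⟨k, rfl⟩
  have hnS : ∀ k, n k ∈ S := fun k => Submodule.smul_mem _ _ (hwS k)
  have hne : ∀ k, w k ≠ 0 → e (n k) = 1 := by
    intro k hk
    have := epos (w k) (hw k) hk
    simp [hn, map_smul, smul_eq_mul, inv_mul_cancel₀ (ne_of_gt this)]
  have hcancel : ∀ k, w k ≠ 0 → (e (w k)) • n k = w k := by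
    intro k hk
    have := epos (w k) (hw k) hk
    simp [hn, smul_smul, mul_inv_cancel₀ (ne_of_gt this)]
  by_cases hsame : ∀ k, w k ≠ 0 → n k = n k₀
  · -- all nonzero images on the same ray
    refine ⟨w k₀, w k₀, hw k₀, hw k₀, hk₀, hk₀, ?_⟩
    intro k
    by_cases hk : w k = 0
    · exact ⟨0, 0, le_refl 0, le_refl 0, by simp [hk]⟩
    · refine ⟨e (w k) * (e (w k₀))⁻¹, 0, ?_, le_refl 0, ?_⟩
      · exact mul_nonneg (le_of_lt (epos _ (hw k) hk)) (le_of_lt (inv_pos.mpr (epos _ (hw k₀) hk₀)))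
      · have hc := hcancel k hk
        rw [hsame k hk] at hc
        conv_lhs => rw [← hc]
        show e (w k) • ((e (w k₀))⁻¹ • w k₀) = _
        match_scalars <;> ring
  · push_neg at hsame
    obtain ⟨k₁, hk₁, hnk₁⟩ := hsame
    set D : Submodule ℝ E := S ⊓ LinearMap.ker (e : E →ₗ[ℝ] ℝ) with hD
    have hDrank : finrank ℝ D ≤ 1 := by
      have hlt : D < S := by
        refine lt_of_le_of_ne inf_le_left (fun hDS => ?_)
        have hmem : w k₀ ∈ D := hDS ▸ hwS k₀
        have : e (w k₀) = 0 := (Submodule.mem_inf.mp hmem).2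
        exact absurd this (ne_of_gt (epos _ (hw k₀) hk₀))
      have := Submodule.finrank_lt_finrank_of_lt hlt
      omega
    have hg0 : n k₁ - n k₀ ≠ 0 := sub_ne_zero.mpr hnk₁
    set g : E := n k₁ - n k₀ with hg
    have hgD : g ∈ D := by
      refine Submodule.mem_inf.mpr ⟨sub_mem (hnS k₁) (hnS k₀), ?_⟩
      have : e g = 0 := by rw [hg, map_sub, hne k₁ hk₁, hne k₀ hk₀, sub_self]
      exact this
    have hspan : span ℝ ({g} : Set E) = D := by
      refine Submodule.eq_of_le_of_finrank_le ((Submodule.span_singleton_le_iff_mem g D).mpr hgD) ?_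
      rw [finrank_span_singleton hg0]
      exact hDrank
    have coord : ∀ x ∈ D, ∃ t : ℝ, x = t • g := by
      intro x hx
      rw [← hspan] at hx
      obtain ⟨a, ha⟩ := Submodule.mem_span_singleton.mp hx
      exact ⟨a, ha.symm⟩
    have ht : ∀ k, ∃ t : ℝ, w k ≠ 0 → n k = n k₀ + t • g := by
      intro k
      by_cases hk : w k = 0
      · exact ⟨0, fun h => absurd hk h⟩
      · obtain ⟨t, htt⟩ := coord (n k - n k₀)
          (Submodule.mem_inf.mpr ⟨sub_mem (hnS k) (hnS k₀),
            by show e _ = 0; rw [map_sub, hne k hk, hne k₀ hk₀, sub_self]⟩)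
        exact ⟨t, fun _ => by rw [← sub_add_cancel (n k) (n k₀), htt, add_comm]⟩
    choose t htspec using ht
    set J : Finset (Fin 2 × Fin 2) := Finset.univ.filter (fun k => w k ≠ 0) with hJ
    have hJk₀ : k₀ ∈ J := Finset.mem_filter.mpr ⟨Finset.mem_univ _, hk₀⟩
    obtain ⟨kmin, hkmin, hmin⟩ := J.exists_min_image t ⟨k₀, hJk₀⟩
    obtain ⟨kmax, hkmax, hmax⟩ := J.exists_max_image t ⟨k₀, hJk₀⟩
    have hkminne : w kmin ≠ 0 := (Finset.mem_filter.mp hkmin).2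
    have hkmaxne : w kmax ≠ 0 := (Finset.mem_filter.mp hkmax).2
    have hepmin : 0 < e (w kmin) := epos _ (hw kmin) hkminne
    have hepmax : 0 < e (w kmax) := epos _ (hw kmax) hkmaxne
    refine ⟨w kmin, w kmax, hw kmin, hw kmax, hkminne, hkmaxne, ?_⟩
    intro k
    by_cases hk : w k = 0
    · exact ⟨0, 0, le_refl 0, le_refl 0, by simp [hk]⟩
    · have hkJ : k ∈ J := Finset.mem_filter.mpr ⟨Finset.mem_univ _, hk⟩
      have h1 : t kmin ≤ t k := hmin k hkJ
      have h2 : t k ≤ t kmax := hmax k hkJ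
      set θ : ℝ := if t kmax = t kmin then 1 else (t kmax - t k)/(t kmax - t kmin) with hθ
      have hθ0 : 0 ≤ θ := by
        rw [hθ]; split
        · norm_num
        · next h =>
          have : 0 < t kmax - t kmin := by
            rcases lt_or_eq_of_le (le_trans h1 h2) with h' | h'
            · linarith
            · exact absurd h'.symm h
          exact div_nonneg (by linarith) (le_of_lt this)
      have hθ1 : θ ≤ 1 := by
        rw [hθ]; split
        · norm_num
        · next h =>
          have hpos : 0 < t kmax - t kmin := by
            rcases lt_or_eq_of_le (le_trans h1 h2) with h' | h'
            · linarith
            · exact absurd h'.symm h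
          rw [div_le_one hpos]
          linarith
      have hkey : θ * t kmin + (1 - θ) * t kmax = t k := by
        rw [hθ]; split
        · next h =>
          have h2' : t k ≤ t kmin := by rw [← h]; exact h2
          have htk : t k = t kmin := le_antisymm h2' h1
          simp [htk]
        · next h =>
          have hd : t kmax - t kmin ≠ 0 := fun h' => h (by linarith)
          field_simp
          ring
      have hcomb : n k = θ • n kmin + (1 - θ) • n kmax := by
        rw [htspec k hk, htspec kmin hkminne, htspec kmax hkmaxne]
        exact affine_interp _ _ _ _ _ _ hkey
      refine ⟨e (w k) * θ * (e (w kmin))⁻¹, e (w k) * (1 - θ) * (e (w kmax))⁻¹, ?_, ?_, ?_⟩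
      · exact mul_nonneg (mul_nonneg (le_of_lt (epos _ (hw k) hk)) hθ0)
          (le_of_lt (inv_pos.mpr hepmin))
      · exact mul_nonneg (mul_nonneg (le_of_lt (epos _ (hw k) hk)) (by linarith))
          (le_of_lt (inv_pos.mpr hepmax))
      · conv_lhs => rw [← hcancel k hk, hcomb]
        show e (w k) • (θ • ((e (w kmin))⁻¹ • w kmin) + (1-θ) • ((e (w kmax))⁻¹ • w kmax)) = _
        match_scalars <;> ring

end ETB
section ETB2

open Module Submodule

variable {E : Type*} [NormedAddCommGroup E] [NormedSpace ℝ E] [FiniteDimensional ℝ E]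
variable {K : Set E}

def vertexImages (W : (Fin 2 → ℝ) × (Fin 2 → ℝ) → E) : Fin 2 × Fin 2 → E :=
  fun k => W (sqVert k.1 k.2)

lemma etb_zero {W : (Fin 2 → ℝ) × (Fin 2 → ℝ) → E} (h : ∀ s ∈ Square, W s = 0) :
    ETBOn Square (coneOf K) W :=
  ⟨0, fun j => j.elim0, fun j => j.elim0, fun j => j.elim0, fun j => j.elim0,
    fun j => j.elim0, fun x hx => by simp [h x hx]⟩

lemma etb_single (e : E →L[ℝ] ℝ) (he : ∀ x ∈ K, 0 < e x)
    {W : (Fin 2 → ℝ) × (Fin 2 → ℝ) → E} (hW : IsAffineOn Square W)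
    (hWpos : ∀ s ∈ Square, W s ∈ coneOf K)
    (r : E) (hr : r ∈ coneOf K) (hr0 : r ≠ 0)
    (h : ∀ s ∈ Square, ∃ γ : ℝ, W s = γ • r) : ETBOn Square (coneOf K) W := by
  have her : 0 < e r := epos_cone e he r hr hr0
  refine ⟨1, ![fun s => (e r)⁻¹ * e (W s)], ![r], ?_, ?_, ?_, ?_⟩
  · intro j
    fin_cases j
    show IsAffineOn Square (fun s => (e r)⁻¹ * e (W s))
    intro x hx y hy a b ha hb hab
    dsimp only
    rw [hW x hx y hy a b ha hb hab]
    simp only [map_add, map_smul, smul_eq_mul]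
    ring
  · intro j x hx
    fin_cases j
    show 0 ≤ (e r)⁻¹ * e (W x)
    exact mul_nonneg (inv_nonneg.mpr her.le) (enonneg_cone e he _ (hWpos x hx))
  · intro j
    fin_cases j
    show r ∈ coneOf K
    exact hr
  · intro x hx
    obtain ⟨γ, hγ⟩ := h x hx
    rw [Fin.sum_univ_one]
    show W x = ((e r)⁻¹ * e (W x)) • r
    rw [hγ, map_smul, smul_eq_mul]
    congr 1
    field_simp

lemma etb_of_pq (hK : Convex ℝ K) (e : E →L[ℝ] ℝ) (he : ∀ x ∈ K, 0 < e x)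
    {W : (Fin 2 → ℝ) × (Fin 2 → ℝ) → E} (hW : IsAffineOn Square W)
    (hWpos : ∀ s ∈ Square, W s ∈ coneOf K)
    (p q : E) (hp : p ∈ coneOf K) (hq : q ∈ coneOf K) (hq0 : q ≠ 0)
    (hpq : ∀ i j : Fin 2, ∃ α β : ℝ, 0 ≤ α ∧ 0 ≤ β ∧ W (sqVert i j) = α • p + β • q) :
    ETBOn Square (coneOf K) W := by
  classical
  obtain ⟨α00, β00, hα00, hβ00, h00⟩ := hpq 0 0
  obtain ⟨α01, β01, hα01, hβ01, h01⟩ := hpq 0 1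
  obtain ⟨α10, β10, hα10, hβ10, h10⟩ := hpq 1 0
  obtain ⟨α11, β11, hα11, hβ11, h11⟩ := hpq 1 1
  have hcomb : ∀ s ∈ Square, ∃ α β : ℝ, 0 ≤ α ∧ 0 ≤ β ∧ W s = α • p + β • q := by
    intro s hs
    have hu0 : 0 ≤ s.1 1 := hs.1.1 1
    have hu1 : s.1 1 ≤ 1 := stdSimplex_coord_le_one hs.1
    have hv0 : 0 ≤ s.2 1 := hs.2.1 1
    have hv1 : s.2 1 ≤ 1 := stdSimplex_coord_le_one hs.2
    refine ⟨(1 - s.1 1) * (1 - s.2 1) * α00 + (1 - s.1 1) * s.2 1 * α01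
        + s.1 1 * (1 - s.2 1) * α10 + s.1 1 * s.2 1 * α11,
      (1 - s.1 1) * (1 - s.2 1) * β00 + (1 - s.1 1) * s.2 1 * β01
        + s.1 1 * (1 - s.2 1) * β10 + s.1 1 * s.2 1 * β11, ?_, ?_, ?_⟩
    · have e1 : (0:ℝ) ≤ (1 - s.1 1) * (1 - s.2 1) := mul_nonneg (by linarith) (by linarith)
      have e2 : (0:ℝ) ≤ (1 - s.1 1) * s.2 1 := mul_nonneg (by linarith) hv0
      have e3 : (0:ℝ) ≤ s.1 1 * (1 - s.2 1) := mul_nonneg hu0 (by linarith)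
      have e4 : (0:ℝ) ≤ s.1 1 * s.2 1 := mul_nonneg hu0 hv0
      have := mul_nonneg e1 hα00
      have := mul_nonneg e2 hα01
      have := mul_nonneg e3 hα10
      have := mul_nonneg e4 hα11
      linarith
    · have e1 : (0:ℝ) ≤ (1 - s.1 1) * (1 - s.2 1) := mul_nonneg (by linarith) (by linarith)
      have e2 : (0:ℝ) ≤ (1 - s.1 1) * s.2 1 := mul_nonneg (by linarith) hv0
      have e3 : (0:ℝ) ≤ s.1 1 * (1 - s.2 1) := mul_nonneg hu0 (by linarith)
      have e4 : (0:ℝ) ≤ s.1 1 * s.2 1 := mul_nonneg hu0 hv0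
      have := mul_nonneg e1 hβ00
      have := mul_nonneg e2 hβ01
      have := mul_nonneg e3 hβ10
      have := mul_nonneg e4 hβ11
      linarith
    · rw [fourVertex hW hs, h00, h01, h10, h11]
      module
  by_cases hli : LinearIndependent ℝ ![p, q]
  · -- independent generators: use dual coordinates
    set S2 : Submodule ℝ E := span ℝ (Set.range ![p, q]) with hS2
    set B := Basis.span hli with hB
    obtain ⟨Cc, hc⟩ := Submodule.exists_isCompl S2
    set π := S2.linearProjOfIsCompl Cc hc with hπ
    set ξ : Fin 2 → (E →ₗ[ℝ] ℝ) := fun i => (B.coord i).comp π with hξ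
    have hmem2 : ∀ α β : ℝ, α • p + β • q ∈ S2 := fun α β =>
      add_mem (smul_mem _ _ (subset_span ⟨0, rfl⟩)) (smul_mem _ _ (subset_span ⟨1, rfl⟩))
    have hsub : ∀ α β : ℝ, (⟨α • p + β • q, hmem2 α β⟩ : S2) = α • B 0 + β • B 1 := by
      intro α β
      apply Subtype.ext
      push_cast
      simp [hB, Basis.span_apply]
    have hval : ∀ (α β : ℝ), ξ 0 (α • p + β • q) = α ∧ ξ 1 (α • p + β • q) = β := by
      intro α β
      have hproj : π (α • p + β • q) = ⟨α • p + β • q, hmem2 α β⟩ :=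
        Submodule.linearProjOfIsCompl_apply_left hc ⟨_, hmem2 α β⟩
      constructor <;>
      · show B.coord _ (π (α • p + β • q)) = _
        rw [hproj, hsub]
        simp [Basis.coord_apply, map_add, map_smul, Basis.repr_self, Finsupp.single_apply]
    refine ⟨2, ![fun s => ξ 0 (W s), fun s => ξ 1 (W s)], ![p, q], ?_, ?_, ?_, ?_⟩
    · intro j
      fin_cases j
      · show IsAffineOn Square (fun s => ξ 0 (W s))
        exact hW.comp_linear (ξ 0)
      · show IsAffineOn Square (fun s => ξ 1 (W s))
        exact hW.comp_linear (ξ 1)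
    · intro j x hx
      obtain ⟨α, β, hα, hβ, hx'⟩ := hcomb x hx
      fin_cases j
      · show 0 ≤ ξ 0 (W x)
        rw [hx', (hval α β).1]; exact hα
      · show 0 ≤ ξ 1 (W x)
        rw [hx', (hval α β).2]; exact hβ
    · intro j
      fin_cases j
      · show p ∈ coneOf K; exact hp
      · show q ∈ coneOf K; exact hq
    · intro x hx
      obtain ⟨α, β, hα, hβ, hx'⟩ := hcomb x hx
      rw [Fin.sum_univ_two]
      show W x = ξ 0 (W x) • p + ξ 1 (W x) • q
      rw [hx', (hval α β).1, (hval α β).2]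
  · -- dependent: everything is on the ray of q
    rw [linearIndependent_fin2] at hli
    push_neg at hli
    simp only [Matrix.cons_val_zero, Matrix.cons_val_one, Matrix.head_cons] at hli
    obtain ⟨a, ha⟩ := hli hq0
    refine etb_single e he hW hWpos q hq hq0 ?_
    intro s hs
    obtain ⟨α, β, hα, hβ, hx'⟩ := hcomb s hs
    refine ⟨α * a + β, ?_⟩
    rw [hx', ← ha, smul_smul, ← add_smul]

lemma etb_of_flat (hK : Convex ℝ K) (e : E →L[ℝ] ℝ) (he : ∀ x ∈ K, 0 < e x)
    {W : (Fin 2 → ℝ) × (Fin 2 → ℝ) → E} (hW : IsAffineOn Square W)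
    (hWpos : ∀ s ∈ Square, W s ∈ coneOf K)
    (hflat : finrank ℝ (span ℝ (Set.range (vertexImages W))) ≤ 2) :
    ETBOn Square (coneOf K) W := by
  by_cases hall : ∀ i j : Fin 2, W (sqVert i j) = 0
  · apply etb_zero
    intro s hs
    rw [fourVertex hW hs, hall 0 0, hall 0 1, hall 1 0, hall 1 1]
    simp
  · push_neg at hall
    obtain ⟨i, j, hij⟩ := hall
    obtain ⟨p, q, hp, hq, hp0, hq0, hpq⟩ := flat_decomp e he (vertexImages W)
      (fun k => hWpos _ (sqVert_mem k.1 k.2)) (i, j) hij hflat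
    exact etb_of_pq hK e he hW hWpos p q hp hq hq0 (fun i j => hpq (i, j))

end ETB2
section Face

open Module Submodule

variable {E : Type*} [NormedAddCommGroup E] [NormedSpace ℝ E] [FiniteDimensional ℝ E]
variable {K : Set E}

/-- The face of the cone generated by `w`. -/
def faceAt (K : Set E) (w : E) : Set E :=
  {x | x ∈ coneOf K ∧ ∃ l : ℝ, 0 < l ∧ w - l • x ∈ coneOf K}

lemma coneOf_witness {v : E} (hv : v ∈ coneOf K) : ∃ x, x ∈ K := by
  obtain ⟨c, _, x, hx, _⟩ := hv
  exact ⟨x, hx⟩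

lemma faceAt_self {w : E} (hw : w ∈ coneOf K) : w ∈ faceAt K w := by
  obtain ⟨x, hx⟩ := coneOf_witness hw
  exact ⟨hw, 1, one_pos, by simpa using coneOf_zero_mem hx⟩

lemma faceAt_of_le {w v : E} (hv : v ∈ coneOf K) (hwv : w - v ∈ coneOf K) :
    v ∈ faceAt K w := ⟨hv, 1, one_pos, by simpa⟩

lemma faceAt_subset_cone {w : E} : faceAt K w ⊆ coneOf K := fun _ h => h.1

lemma cone_shrink (hK : Convex ℝ K) {w x : E} (hw : w ∈ coneOf K) {lam mu : ℝ}
    (hlam : 0 < lam) (hmu0 : 0 ≤ mu) (hmulam : mu ≤ lam)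
    (h : w - lam • x ∈ coneOf K) : w - mu • x ∈ coneOf K := by
  have heq : w - mu • x = (mu/lam) • (w - lam • x) + (1 - mu/lam) • w := by
    match_scalars <;> field_simp <;> ring
  rw [heq]
  refine coneOf_add_mem hK (coneOf_smul_mem h (div_nonneg hmu0 hlam.le))
    (coneOf_smul_mem hw ?_)
  rw [sub_nonneg]
  exact (div_le_one hlam).mpr hmulam

lemma perturb_of_mem_spanFace (hK : Convex ℝ K) {w : E} (hw : w ∈ coneOf K) {z : E}
    (hz : z ∈ span ℝ (faceAt K w)) :
    ∃ ε : ℝ, 0 < ε ∧ w - ε • z ∈ coneOf K ∧ w + ε • z ∈ coneOf K := by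
  induction hz using Submodule.span_induction with
  | mem x hx =>
    obtain ⟨hxc, l, hl, hwl⟩ := hx
    exact ⟨l, hl, hwl, coneOf_add_mem hK hw (coneOf_smul_mem hxc hl.le)⟩
  | zero => exact ⟨1, one_pos, by simpa using hw, by simpa using hw⟩
  | add x y hx hy Px Py =>
    obtain ⟨ε₁, hε₁, h1m, h1p⟩ := Px
    obtain ⟨ε₂, hε₂, h2m, h2p⟩ := Py
    set ε := min ε₁ ε₂ / 2 with hε
    have hεpos : 0 < ε := by positivity
    have h2ε₁ : 2 * ε ≤ ε₁ := by
      have := min_le_left ε₁ ε₂; rw [hε]; linarith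
    have h2ε₂ : 2 * ε ≤ ε₂ := by
      have := min_le_right ε₁ ε₂; rw [hε]; linarith
    have h2ε0 : (0:ℝ) ≤ 2 * ε := by linarith
    refine ⟨ε, hεpos, ?_, ?_⟩
    · have hxm : w - (2*ε) • x ∈ coneOf K := cone_shrink hK hw hε₁ h2ε0 h2ε₁ h1m
      have hym : w - (2*ε) • y ∈ coneOf K := cone_shrink hK hw hε₂ h2ε0 h2ε₂ h2m
      have heq : w - ε • (x + y) = (2⁻¹:ℝ) • (w - (2*ε) • x) + (2⁻¹:ℝ) • (w - (2*ε) • y) := by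
        match_scalars <;> ring
      rw [heq]
      exact coneOf_add_mem hK (coneOf_smul_mem hxm (by norm_num))
        (coneOf_smul_mem hym (by norm_num))
    · have hxp : w - (2*ε) • (-x) ∈ coneOf K := by
        have : w - (2*ε) • (-x) = w + (2*ε) • x := by match_scalars <;> ring
        rw [this]
        have : w + ε₁ • x = w - ε₁ • (-x) := by match_scalars <;> ring
        rw [this] at h1p
        have := cone_shrink hK hw hε₁ h2ε0 h2ε₁ h1p
        have heq2 : w - (2*ε) • (-x) = w + (2*ε) • x := by match_scalars <;> ring
        rwa [heq2] at this
      have hyp : w + (2*ε) • y ∈ coneOf K := by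
        have : w + ε₂ • y = w - ε₂ • (-y) := by match_scalars <;> ring
        rw [this] at h2p
        have := cone_shrink hK hw hε₂ h2ε0 h2ε₂ h2p
        have heq2 : w - (2*ε) • (-y) = w + (2*ε) • y := by match_scalars <;> ring
        rwa [heq2] at this
      have hxp' : w + (2*ε) • x ∈ coneOf K := by
        have heq2 : w - (2*ε) • (-x) = w + (2*ε) • x := by match_scalars <;> ring
        rwa [heq2] at hxp
      have heq : w + ε • (x + y) = (2⁻¹:ℝ) • (w + (2*ε) • x) + (2⁻¹:ℝ) • (w + (2*ε) • y) := by
        match_scalars <;> ring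
      rw [heq]
      exact coneOf_add_mem hK (coneOf_smul_mem hxp' (by norm_num))
        (coneOf_smul_mem hyp (by norm_num))
  | smul a x hx Px =>
    obtain ⟨ε, hε, hm, hp⟩ := Px
    rcases lt_trichotomy a 0 with ha | ha | ha
    · have ha' : a ≠ 0 := ha.ne
      have hc : ε / (-a) * a = -ε := by
        rw [div_mul_eq_mul_div, div_eq_iff (neg_ne_zero.mpr ha')]; ring
      refine ⟨ε / (-a), div_pos hε (neg_pos.mpr ha), ?_, ?_⟩
      · have heq : w - (ε / (-a)) • (a • x) = w + ε • x := by
          rw [smul_smul, hc, neg_smul, sub_neg_eq_add]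
        rw [heq]; exact hp
      · have heq : w + (ε / (-a)) • (a • x) = w - ε • x := by
          rw [smul_smul, hc, neg_smul, ← sub_eq_add_neg]
        rw [heq]; exact hm
    · exact ⟨1, one_pos, by simpa [ha] using hw, by simpa [ha] using hw⟩
    · have ha' : a ≠ 0 := ha.ne'
      have hc : ε / a * a = ε := div_mul_cancel₀ ε ha'
      refine ⟨ε / a, div_pos hε ha, ?_, ?_⟩
      · have heq : w - (ε / a) • (a • x) = w - ε • x := by
          rw [smul_smul, hc]
        rw [heq]; exact hm
      · have heq : w + (ε / a) • (a • x) = w + ε • x := by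
          rw [smul_smul, hc]
        rw [heq]; exact hp

lemma spanFace_le_spanK {w : E} : span ℝ (faceAt K w) ≤ span ℝ K := by
  rw [span_le]
  exact fun x hx => coneOf_mem_span (faceAt_subset_cone hx)

lemma finrank_spanK_le (hdim : finrank ℝ (vectorSpan ℝ K) = 2) {x₀ : E} (hx₀ : x₀ ∈ K) :
    finrank ℝ (span ℝ K) ≤ 3 := by
  have hle : span ℝ K ≤ vectorSpan ℝ K ⊔ span ℝ ({x₀} : Set E) := by
    rw [span_le]
    intro k hk
    refine Submodule.mem_sup.mpr ⟨k - x₀, ?_, x₀, Submodule.mem_span_singleton_self x₀, by abel⟩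
    have := vsub_mem_vectorSpan ℝ hk hx₀
    simpa [vsub_eq_sub] using this
  have h1 : finrank ℝ (span ℝ K) ≤ finrank ℝ ↥(vectorSpan ℝ K ⊔ span ℝ ({x₀} : Set E)) :=
    Submodule.finrank_mono hle
  have h2 := Submodule.finrank_sup_add_finrank_inf_eq (vectorSpan ℝ K) (span ℝ ({x₀} : Set E))
  have h3 : finrank ℝ (span ℝ ({x₀} : Set E)) ≤ 1 := by
    have := finrank_span_le_card (R := ℝ) ({x₀} : Set E)
    simpa using this
  omega

/-- The key dimension count: a nontrivial affine perturbation direction exists. -/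
lemma exists_perturb_dir (L00 L01 L10 L11 : Submodule ℝ E) (V : Submodule ℝ E)
    (hV : finrank ℝ V ≤ 3)
    (hle00 : L00 ≤ V) (hle01 : L01 ≤ V) (hle10 : L10 ≤ V) (hle11 : L11 ≤ V)
    (hrank : 5 ≤ finrank ℝ L00 + finrank ℝ L01 + finrank ℝ L10 + finrank ℝ L11)
    {w00 w01 w10 w11 : E}
    (hw00 : w00 ∈ L00) (hw01 : w01 ∈ L01) (hw10 : w10 ∈ L10) (hw11 : w11 ∈ L11) :
    ∃ z00 ∈ L00, ∃ z01 ∈ L01, ∃ z10 ∈ L10, ∃ z11 ∈ L11,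
      z00 + z11 = z01 + z10 ∧
      ¬ ∃ c : ℝ, z00 = c • w00 ∧ z01 = c • w01 ∧ z10 = c • w10 ∧ z11 = c • w11 := by
  classical
  let ψ : (↥L00 × ↥L01 × ↥L10 × ↥L11) →ₗ[ℝ] E :=
    { toFun := fun d => (((d.1 : E)) + ((d.2.2.2 : E))) - (((d.2.1 : E)) + ((d.2.2.1 : E)))
      map_add' := by
        intro a b
        simp only [Prod.fst_add, Prod.snd_add, Submodule.coe_add]
        abel
      map_smul' := by
        intro c a
        simp only [Prod.smul_fst, Prod.smul_snd, SetLike.val_smul, RingHom.id_apply,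
          smul_sub, smul_add] }
  have hrange : LinearMap.range ψ ≤ V := by
    rintro x ⟨d, rfl⟩
    exact sub_mem (add_mem (hle00 d.1.2) (hle11 d.2.2.2.2))
      (add_mem (hle01 d.2.1.2) (hle10 d.2.2.1.2))
  have hD : finrank ℝ (↥L00 × ↥L01 × ↥L10 × ↥L11)
      = finrank ℝ L00 + finrank ℝ L01 + finrank ℝ L10 + finrank ℝ L11 := by
    rw [Module.finrank_prod, Module.finrank_prod, Module.finrank_prod]
    omega
  have hker : 2 ≤ finrank ℝ (LinearMap.ker ψ) := by
    have hrn := LinearMap.finrank_range_add_finrank_ker ψ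
    rw [hD] at hrn
    have hr : finrank ℝ (LinearMap.range ψ) ≤ 3 :=
      le_trans (Submodule.finrank_mono hrange) hV
    omega
  set wt : ↥L00 × ↥L01 × ↥L10 × ↥L11 :=
    (⟨w00, hw00⟩, ⟨w01, hw01⟩, ⟨w10, hw10⟩, ⟨w11, hw11⟩) with hwt
  have hnotle : ¬ (LinearMap.ker ψ ≤ span ℝ ({wt} : Set (↥L00 × ↥L01 × ↥L10 × ↥L11))) := by
    intro hle
    have h1 := Submodule.finrank_mono (R := ℝ) (M := ↥L00 × ↥L01 × ↥L10 × ↥L11) hle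
    have h3 : finrank ℝ (span ℝ ({wt} : Set (↥L00 × ↥L01 × ↥L10 × ↥L11))) ≤ 1 := by
      have := finrank_span_le_card (R := ℝ) ({wt} : Set (↥L00 × ↥L01 × ↥L10 × ↥L11))
      simpa using this
    omega
  obtain ⟨z, hzker, hznot⟩ := SetLike.not_le_iff_exists.mp hnotle
  refine ⟨z.1, z.1.2, z.2.1, z.2.1.2, z.2.2.1, z.2.2.1.2, z.2.2.2, z.2.2.2.2, ?_, ?_⟩
  · have h : (((z.1 : E)) + ((z.2.2.2 : E))) - (((z.2.1 : E)) + ((z.2.2.1 : E))) = 0 :=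
      LinearMap.mem_ker.mp hzker
    exact sub_eq_zero.mp h
  · rintro ⟨c, h1, h2, h3, h4⟩
    apply hznot
    apply Submodule.mem_span_singleton.mpr
    refine ⟨c, ?_⟩
    have hc : c • wt = (⟨c • w00, L00.smul_mem c hw00⟩, ⟨c • w01, L01.smul_mem c hw01⟩,
        ⟨c • w10, L10.smul_mem c hw10⟩, ⟨c • w11, L11.smul_mem c hw11⟩) := rfl
    rw [hc]
    refine Prod.ext (Subtype.ext ?_)
      (Prod.ext (Subtype.ext ?_) (Prod.ext (Subtype.ext ?_) (Subtype.ext ?_))) <;>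
      simp [h1, h2, h3, h4]

lemma finrank_span_singleton_le' (a : E) : finrank ℝ (span ℝ ({a} : Set E)) ≤ 1 := by
  by_cases h : a = 0
  · subst h
    rw [Submodule.span_zero_singleton]
    simp
  · rw [finrank_span_singleton h]

lemma finrank_span_pair_le (a b : E) : finrank ℝ (span ℝ ({a, b} : Set E)) ≤ 2 := by
  rw [Submodule.span_insert]
  have ha := finrank_span_singleton_le' a
  have hb := finrank_span_singleton_le' b
  have h := Submodule.finrank_sup_add_finrank_inf_eq (span ℝ ({a} : Set E)) (span ℝ ({b} : Set E))
  omega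

end Face
section Extract

variable {E : Type*} [NormedAddCommGroup E] [NormedSpace ℝ E] [FiniteDimensional ℝ E]

lemma extract_coeff {w z : E} {ε tt : ℝ} (hε : ε ≠ 0)
    (h : (2⁻¹:ℝ) • (w + ε • z) = tt • w) : z = ((2*tt - 1)/ε) • w := by
  have h2 : w + ε • z = (2*tt) • w := by
    have hh := congrArg (fun v : E => (2:ℝ) • v) h
    rw [smul_smul, smul_smul] at hh
    norm_num at hh
    exact hh
  have h4 : ε • z = (2*tt - 1) • w := by
    have h5 : ε • z = (w + ε • z) - w := by abel
    rw [h5, h2]; module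
  calc z = ε⁻¹ • (ε • z) := by rw [smul_smul, inv_mul_cancel₀ hε, one_smul]
  _ = ε⁻¹ • ((2*tt-1) • w) := by rw [h4]
  _ = ((2*tt - 1)/ε) • w := by rw [smul_smul, ← div_eq_inv_mul]

lemma cone_shrink2 {K : Set E} (hK : Convex ℝ K) {w z : E} (hw : w ∈ coneOf K) {ε₀ ε : ℝ}
    (hε₀ : 0 < ε₀) (hε : 0 ≤ ε) (hle : ε ≤ ε₀)
    (hm : w - ε₀ • z ∈ coneOf K) (hp : w + ε₀ • z ∈ coneOf K) :
    w - ε • z ∈ coneOf K ∧ w + ε • z ∈ coneOf K := by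
  constructor
  · exact cone_shrink hK hw hε₀ hε hle hm
  · have h1 : w + ε₀ • z = w - ε₀ • (-z) := by module
    have h2 : w + ε • z = w - ε • (-z) := by module
    rw [h2]; rw [h1] at hp
    exact cone_shrink hK hw hε₀ hε hle hp

end Extract

/-- for a two-dimensional state space `K` and a non-entanglement-
breaking affine map `W : □_2 → V(K)⁺`, `W` is extremal in the cone of positive
affine maps iff all four vertex images `W(s_{i,j})` are extremal in `V(K)⁺`. -/
theorem stmt_18 {E : Type*} [NormedAddCommGroup E] [NormedSpace ℝ E] [FiniteDimensional ℝ E]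
    (K : Set E) (hK : Convex ℝ K) (hKc : IsCompact K) (h0 : (0 : E) ∉ K)
    (hdim : Module.finrank ℝ (vectorSpan ℝ K) = 2)
    (W : ((Fin 2 → ℝ) × (Fin 2 → ℝ)) → E)
    (hW : IsAffineOn Square W) (hWpos : ∀ s ∈ Square, W s ∈ coneOf K)
    (hnETB : ¬ ETBOn Square (coneOf K) W) :
    ExtremalMap (coneOf K) W ↔ ∀ i j : Fin 2, ExtremalIn (coneOf K) (W (sqVert i j)) := by
  classical
  open Module Submodule in
  -- a strictly positive functional on K
  obtain ⟨e, u, heu, he'⟩ := geometric_hahn_banach_point_closed hK hKc.isClosed h0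
  have he : ∀ x ∈ K, 0 < e x := by
    intro x hx
    have h1 : (0:ℝ) < u := by simpa using heu
    linarith [he' x hx]
  have hKne : ∃ x, x ∈ K := coneOf_witness (hWpos _ (sqVert_mem 0 0))
  have hVert : ∀ i j : Fin 2, W (sqVert i j) ∈ coneOf K := fun i j => hWpos _ (sqVert_mem i j)
  have hrel : W (sqVert 0 0) + W (sqVert 1 1) = W (sqVert 0 1) + W (sqVert 1 0) :=
    vertex_relation hW
  have hspanK3 : finrank ℝ (span ℝ K) ≤ 3 := finrank_spanK_le hdim hKne.choose_spec
  have hflatETB : ¬ finrank ℝ (span ℝ (Set.range (vertexImages W))) ≤ 2 :=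
    fun h => hnETB (etb_of_flat hK e he hW hWpos h)
  -- auxiliary: a pair spanning all vertices forces a dimension bound
  have hspan2 : ∀ a b : E, (∀ i j : Fin 2, W (sqVert i j) ∈ span ℝ ({a, b} : Set E)) →
      finrank ℝ (span ℝ (Set.range (vertexImages W))) ≤ 2 := by
    intro a b hmem
    have hle : span ℝ (Set.range (vertexImages W)) ≤ span ℝ ({a, b} : Set E) := by
      rw [span_le]; rintro x ⟨k, rfl⟩; exact hmem k.1 k.2
    exact le_trans (Submodule.finrank_mono hle) (finrank_span_pair_le a b)
  -- all vertex images are nonzero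
  have hnz : ∀ i j : Fin 2, W (sqVert i j) ≠ 0 := by
    have hcase : ∀ i j : Fin 2, (i, j) = ((0:Fin 2), (0:Fin 2)) ∨ (i, j) = (0, 1) ∨
        (i, j) = (1, 0) ∨ (i, j) = (1, 1) := by decide
    intro i j h0'
    apply hflatETB
    rcases hcase i j with h | h | h | h <;>
      obtain ⟨rfl, rfl⟩ := Prod.mk.injEq .. ▸ (by exact ⟨congrArg Prod.fst h, congrArg Prod.snd h⟩ :
        i = _ ∧ j = _)
    · refine hspan2 (W (sqVert 0 1)) (W (sqVert 1 0)) ?_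
      intro i j
      rcases hcase i j with h | h | h | h <;>
        obtain ⟨rfl, rfl⟩ := (by exact ⟨congrArg Prod.fst h, congrArg Prod.snd h⟩ : i = _ ∧ j = _)
      · rw [h0']; exact Submodule.zero_mem _
      · exact subset_span (by simp)
      · exact subset_span (by simp)
      · have h11 : W (sqVert 1 1) = W (sqVert 0 1) + W (sqVert 1 0) := by
          rw [h0', zero_add] at hrel; exact hrel
        rw [h11]
        exact add_mem (subset_span (by simp)) (subset_span (by simp))
    · refine hspan2 (W (sqVert 0 0)) (W (sqVert 1 1)) ?_
      intro i j
      rcases hcase i j with h | h | h | h <;>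
        obtain ⟨rfl, rfl⟩ := (by exact ⟨congrArg Prod.fst h, congrArg Prod.snd h⟩ : i = _ ∧ j = _)
      · exact subset_span (by simp)
      · rw [h0']; exact Submodule.zero_mem _
      · have h10 : W (sqVert 1 0) = W (sqVert 0 0) + W (sqVert 1 1) := by
          rw [h0', zero_add] at hrel; exact hrel.symm
        rw [h10]
        exact add_mem (subset_span (by simp)) (subset_span (by simp))
      · exact subset_span (by simp)
    · refine hspan2 (W (sqVert 0 0)) (W (sqVert 1 1)) ?_
      intro i j
      rcases hcase i j with h | h | h | h <;>
        obtain ⟨rfl, rfl⟩ := (by exact ⟨congrArg Prod.fst h, congrArg Prod.snd h⟩ : i = _ ∧ j = _)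
      · exact subset_span (by simp)
      · have h01 : W (sqVert 0 1) = W (sqVert 0 0) + W (sqVert 1 1) := by
          rw [h0', add_zero] at hrel; exact hrel.symm
        rw [h01]
        exact add_mem (subset_span (by simp)) (subset_span (by simp))
      · rw [h0']; exact Submodule.zero_mem _
      · exact subset_span (by simp)
    · refine hspan2 (W (sqVert 0 1)) (W (sqVert 1 0)) ?_
      intro i j
      rcases hcase i j with h | h | h | h <;>
        obtain ⟨rfl, rfl⟩ := (by exact ⟨congrArg Prod.fst h, congrArg Prod.snd h⟩ : i = _ ∧ j = _)
      · have h00 : W (sqVert 0 0) = W (sqVert 0 1) + W (sqVert 1 0) := by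
          rw [h0', add_zero] at hrel; exact hrel
        rw [h00]
        exact add_mem (subset_span (by simp)) (subset_span (by simp))
      · exact subset_span (by simp)
      · exact subset_span (by simp)
      · rw [h0']; exact Submodule.zero_mem _
  have hcase : ∀ i j : Fin 2, (i, j) = ((0:Fin 2), (0:Fin 2)) ∨ (i, j) = (0, 1) ∨
      (i, j) = (1, 0) ∨ (i, j) = (1, 1) := by decide
  constructor
  · rintro ⟨-, hWext⟩ i j
    refine ⟨hVert i j, hnz i j, ?_⟩
    intro v' hv' hsubv
    by_contra hcon
    push_neg at hcon
    have hmemL : ∀ a b : Fin 2, W (sqVert a b) ∈ span ℝ (faceAt K (W (sqVert a b))) :=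
      fun a b => subset_span (faceAt_self (hVert a b))
    have hL1 : ∀ a b : Fin 2, 1 ≤ finrank ℝ (span ℝ (faceAt K (W (sqVert a b)))) := by
      intro a b
      have h1 : span ℝ ({W (sqVert a b)} : Set E) ≤ span ℝ (faceAt K (W (sqVert a b))) :=
        (Submodule.span_singleton_le_iff_mem _ _).mpr (hmemL a b)
      have h2 := Submodule.finrank_mono (R := ℝ) h1
      rwa [finrank_span_singleton (hnz a b)] at h2
    have hv'mem : v' ∈ span ℝ (faceAt K (W (sqVert i j))) :=
      subset_span (faceAt_of_le hv' hsubv)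
    have hli : LinearIndependent ℝ ![W (sqVert i j), v'] := by
      rw [linearIndependent_fin2]
      simp only [Matrix.cons_val_zero, Matrix.cons_val_one, Matrix.head_cons]
      constructor
      · intro h
        exact hcon 0 le_rfl (by rw [h, zero_smul])
      · intro a ha
        by_cases hv0 : v' = 0
        · exact hnz i j (by rw [← ha, hv0, smul_zero])
        · have ha0 : a ≠ 0 := by
            rintro rfl
            exact hnz i j (by rw [← ha, zero_smul])
          have hv'eq : v' = a⁻¹ • W (sqVert i j) := by
            rw [← ha, smul_smul, inv_mul_cancel₀ ha0, one_smul]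
          rcases lt_or_gt_of_ne ha0 with haneg | hapos
          · have h1 : 0 < e (W (sqVert i j)) := epos_cone e he _ (hVert i j) (hnz i j)
            have h2 : 0 ≤ e v' := enonneg_cone e he _ hv'
            rw [hv'eq, map_smul, smul_eq_mul] at h2
            have h3 : a⁻¹ < 0 := inv_lt_zero.mpr haneg
            nlinarith
          · exact hcon a⁻¹ (inv_nonneg.mpr hapos.le) hv'eq
    have hL2 : 2 ≤ finrank ℝ (span ℝ (faceAt K (W (sqVert i j)))) := by
      have hle : span ℝ (Set.range ![W (sqVert i j), v'])
          ≤ span ℝ (faceAt K (W (sqVert i j))) := by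
        rw [span_le]
        rintro x ⟨k, rfl⟩
        fin_cases k
        · exact hmemL i j
        · exact hv'mem
      have h2 := Submodule.finrank_mono (R := ℝ) hle
      rw [finrank_span_eq_card hli] at h2
      simpa using h2
    have hrank5 : 5 ≤ finrank ℝ (span ℝ (faceAt K (W (sqVert 0 0))))
        + finrank ℝ (span ℝ (faceAt K (W (sqVert 0 1))))
        + finrank ℝ (span ℝ (faceAt K (W (sqVert 1 0))))
        + finrank ℝ (span ℝ (faceAt K (W (sqVert 1 1)))) := by
      have h00 := hL1 0 0
      have h01 := hL1 0 1
      have h10 := hL1 1 0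
      have h11 := hL1 1 1
      rcases hcase i j with h | h | h | h <;>
        (rw [Prod.mk.injEq] at h) <;> obtain ⟨rfl, rfl⟩ := h <;>
        omega
    obtain ⟨z00, hz00, z01, hz01, z10, hz10, z11, hz11, hzrel, hznot⟩ :=
      exists_perturb_dir _ _ _ _ (span ℝ K) hspanK3 spanFace_le_spanK spanFace_le_spanK
        spanFace_le_spanK spanFace_le_spanK hrank5 (hmemL 0 0) (hmemL 0 1) (hmemL 1 0)
        (hmemL 1 1)
    obtain ⟨ε00, hε00, h00m, h00p⟩ := perturb_of_mem_spanFace hK (hVert 0 0) hz00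
    obtain ⟨ε01, hε01, h01m, h01p⟩ := perturb_of_mem_spanFace hK (hVert 0 1) hz01
    obtain ⟨ε10, hε10, h10m, h10p⟩ := perturb_of_mem_spanFace hK (hVert 1 0) hz10
    obtain ⟨ε11, hε11, h11m, h11p⟩ := perturb_of_mem_spanFace hK (hVert 1 1) hz11
    set ε : ℝ := min (min ε00 ε01) (min ε10 ε11) with hεdef
    have hεpos : 0 < ε := lt_min (lt_min hε00 hε01) (lt_min hε10 hε11)
    have hc00 := cone_shrink2 hK (hVert 0 0) hε00 hεpos.le
      (le_trans (min_le_left _ _) (min_le_left _ _)) h00m h00p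
    have hc01 := cone_shrink2 hK (hVert 0 1) hε01 hεpos.le
      (le_trans (min_le_left _ _) (min_le_right _ _)) h01m h01p
    have hc10 := cone_shrink2 hK (hVert 1 0) hε10 hεpos.le
      (le_trans (min_le_right _ _) (min_le_left _ _)) h10m h10p
    have hc11 := cone_shrink2 hK (hVert 1 1) hε11 hεpos.le
      (le_trans (min_le_right _ _) (min_le_right _ _)) h11m h11p
    set ζ : ((Fin 2 → ℝ) × (Fin 2 → ℝ)) → E :=
      fun s => z00 + (s.1 1) • (z10 - z00) + (s.2 1) • (z01 - z00) with hζdef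
    have hs0 : (Pi.single (0:Fin 2) (1:ℝ) : Fin 2 → ℝ) 1 = 0 := by simp [Pi.single_apply]
    have hs1 : (Pi.single (1:Fin 2) (1:ℝ) : Fin 2 → ℝ) 1 = 1 := by simp
    have hζ00 : ζ (sqVert 0 0) = z00 := by
      show z00 + ((Pi.single (0:Fin 2) (1:ℝ) : Fin 2 → ℝ) 1) • (z10 - z00)
          + ((Pi.single (0:Fin 2) (1:ℝ) : Fin 2 → ℝ) 1) • (z01 - z00) = z00
      rw [hs0]; module
    have hζ01 : ζ (sqVert 0 1) = z01 := by
      show z00 + ((Pi.single (0:Fin 2) (1:ℝ) : Fin 2 → ℝ) 1) • (z10 - z00)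
          + ((Pi.single (1:Fin 2) (1:ℝ) : Fin 2 → ℝ) 1) • (z01 - z00) = z01
      rw [hs0, hs1]; module
    have hζ10 : ζ (sqVert 1 0) = z10 := by
      show z00 + ((Pi.single (1:Fin 2) (1:ℝ) : Fin 2 → ℝ) 1) • (z10 - z00)
          + ((Pi.single (0:Fin 2) (1:ℝ) : Fin 2 → ℝ) 1) • (z01 - z00) = z10
      rw [hs0, hs1]; module
    have hζ11 : ζ (sqVert 1 1) = z11 := by
      show z00 + ((Pi.single (1:Fin 2) (1:ℝ) : Fin 2 → ℝ) 1) • (z10 - z00)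
          + ((Pi.single (1:Fin 2) (1:ℝ) : Fin 2 → ℝ) 1) • (z01 - z00) = z11
      rw [hs1, eq_sub_of_add_eq' hzrel]; module
    have hζaff : IsAffineOn Square ζ := by
      intro x hx y hy a b ha hb hab
      show z00 + ((a • x + b • y).1 1) • (z10 - z00) + ((a • x + b • y).2 1) • (z01 - z00)
          = a • (z00 + (x.1 1) • (z10 - z00) + (x.2 1) • (z01 - z00))
          + b • (z00 + (y.1 1) • (z10 - z00) + (y.2 1) • (z01 - z00))
      have h1 : (a • x + b • y).1 1 = a * x.1 1 + b * y.1 1 := rfl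
      have h2 : (a • x + b • y).2 1 = a * x.2 1 + b * y.2 1 := rfl
      rw [h1, h2]
      match_scalars <;> linarith
    have hW'aff : IsAffineOn Square (fun s => (2⁻¹:ℝ) • (W s + ε • ζ s)) :=
      (hW.add (hζaff.smul ε)).smul 2⁻¹
    have hDaff : IsAffineOn Square (fun s => W s - (2⁻¹:ℝ) • (W s + ε • ζ s)) :=
      hW.sub hW'aff
    have hkey : ∀ (wv zv : E), wv - (2⁻¹:ℝ) • (wv + ε • zv) = (2⁻¹:ℝ) • (wv - ε • zv) := by
      intro wv zv; module
    have hW'pos : ∀ s ∈ Square, (2⁻¹:ℝ) • (W s + ε • ζ s) ∈ coneOf K := by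
      refine mem_cone_of_vertices hK hW'aff ?_
      intro a b
      show (2⁻¹:ℝ) • (W (sqVert a b) + ε • ζ (sqVert a b)) ∈ coneOf K
      rcases hcase a b with h | h | h | h <;>
        (rw [Prod.mk.injEq] at h) <;> obtain ⟨rfl, rfl⟩ := h
      · rw [hζ00]; exact coneOf_smul_mem hc00.2 (by norm_num)
      · rw [hζ01]; exact coneOf_smul_mem hc01.2 (by norm_num)
      · rw [hζ10]; exact coneOf_smul_mem hc10.2 (by norm_num)
      · rw [hζ11]; exact coneOf_smul_mem hc11.2 (by norm_num)
    have hDpos : ∀ s ∈ Square, W s - (2⁻¹:ℝ) • (W s + ε • ζ s) ∈ coneOf K := by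
      refine mem_cone_of_vertices hK hDaff ?_
      intro a b
      show W (sqVert a b) - (2⁻¹:ℝ) • (W (sqVert a b) + ε • ζ (sqVert a b)) ∈ coneOf K
      rcases hcase a b with h | h | h | h <;>
        (rw [Prod.mk.injEq] at h) <;> obtain ⟨rfl, rfl⟩ := h
      · rw [hζ00, hkey]; exact coneOf_smul_mem hc00.1 (by norm_num)
      · rw [hζ01, hkey]; exact coneOf_smul_mem hc01.1 (by norm_num)
      · rw [hζ10, hkey]; exact coneOf_smul_mem hc10.1 (by norm_num)
      · rw [hζ11, hkey]; exact coneOf_smul_mem hc11.1 (by norm_num)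
    obtain ⟨tt, htt0, htteq⟩ := hWext _ hW'aff hW'pos hDpos
    apply hznot
    refine ⟨(2*tt - 1)/ε, ?_, ?_, ?_, ?_⟩
    · have h : (2⁻¹:ℝ) • (W (sqVert 0 0) + ε • ζ (sqVert 0 0)) = tt • W (sqVert 0 0) :=
        htteq _ (sqVert_mem 0 0)
      rw [hζ00] at h
      exact extract_coeff hεpos.ne' h
    · have h : (2⁻¹:ℝ) • (W (sqVert 0 1) + ε • ζ (sqVert 0 1)) = tt • W (sqVert 0 1) :=
        htteq _ (sqVert_mem 0 1)
      rw [hζ01] at h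
      exact extract_coeff hεpos.ne' h
    · have h : (2⁻¹:ℝ) • (W (sqVert 1 0) + ε • ζ (sqVert 1 0)) = tt • W (sqVert 1 0) :=
        htteq _ (sqVert_mem 1 0)
      rw [hζ10] at h
      exact extract_coeff hεpos.ne' h
    · have h : (2⁻¹:ℝ) • (W (sqVert 1 1) + ε • ζ (sqVert 1 1)) = tt • W (sqVert 1 1) :=
        htteq _ (sqVert_mem 1 1)
      rw [hζ11] at h
      exact extract_coeff hεpos.ne' h
  · intro hext
    constructor
    · intro hzero
      exact hnz 0 0 (hzero _ (sqVert_mem 0 0))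
    · intro W' hW'aff hW'pos hW'sub
      have hts : ∀ i j : Fin 2, ∃ t : ℝ, 0 ≤ t ∧ W' (sqVert i j) = t • W (sqVert i j) :=
        fun i j => (hext i j).2.2 _ (hW'pos _ (sqVert_mem i j)) (hW'sub _ (sqVert_mem i j))
      choose t ht hteq using hts
      have h11eq : W (sqVert 1 1) = W (sqVert 0 1) + W (sqVert 1 0) - W (sqVert 0 0) := by
        have h := eq_sub_of_add_eq' hrel
        rw [h]
      have hle3 : span ℝ (Set.range (vertexImages W)) ≤
          span ℝ (Set.range ![W (sqVert 0 0), W (sqVert 0 1), W (sqVert 1 0)]) := by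
        rw [span_le]
        rintro x ⟨k, rfl⟩
        have hm0 : W (sqVert 0 0) ∈
            span ℝ (Set.range ![W (sqVert 0 0), W (sqVert 0 1), W (sqVert 1 0)]) :=
          subset_span ⟨0, rfl⟩
        have hm1 : W (sqVert 0 1) ∈
            span ℝ (Set.range ![W (sqVert 0 0), W (sqVert 0 1), W (sqVert 1 0)]) :=
          subset_span ⟨1, rfl⟩
        have hm2 : W (sqVert 1 0) ∈
            span ℝ (Set.range ![W (sqVert 0 0), W (sqVert 0 1), W (sqVert 1 0)]) :=
          subset_span ⟨2, rfl⟩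
        show W (sqVert k.1 k.2) ∈ _
        rcases hcase k.1 k.2 with h | h | h | h <;>
          (rw [Prod.mk.injEq] at h) <;> obtain ⟨h1, h2⟩ := h <;> rw [h1, h2]
        · exact hm0
        · exact hm1
        · exact hm2
        · rw [h11eq]
          exact sub_mem (add_mem hm1 hm2) hm0
      have hli3 : LinearIndependent ℝ ![W (sqVert 0 0), W (sqVert 0 1), W (sqVert 1 0)] := by
        rw [linearIndependent_iff_card_eq_finrank_span]
        have hge : 3 ≤ finrank ℝ
            (span ℝ (Set.range ![W (sqVert 0 0), W (sqVert 0 1), W (sqVert 1 0)])) := by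
          have h2 := Submodule.finrank_mono (R := ℝ) hle3
          have h1 : 2 < finrank ℝ (span ℝ (Set.range (vertexImages W))) :=
            Nat.lt_of_not_le hflatETB
          omega
        have hle' : finrank ℝ
            (span ℝ (Set.range ![W (sqVert 0 0), W (sqVert 0 1), W (sqVert 1 0)])) ≤ 3 := by
          have h3 := finrank_span_le_card (R := ℝ)
            (Set.range ![W (sqVert 0 0), W (sqVert 0 1), W (sqVert 1 0)])
          have hcard :
              (Set.range ![W (sqVert 0 0), W (sqVert 0 1), W (sqVert 1 0)]).toFinset.card ≤ 3 := by
            rw [Set.toFinset_range]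
            exact le_trans Finset.card_image_le (by simp)
          omega
        show Fintype.card (Fin 3) = finrank ℝ
          (span ℝ (Set.range ![W (sqVert 0 0), W (sqVert 0 1), W (sqVert 1 0)]))
        simp only [Fintype.card_fin]
        omega
      have hrel' := vertex_relation hW'aff
      rw [hteq 0 0, hteq 1 1, hteq 0 1, hteq 1 0, h11eq] at hrel'
      have hzero3 : (t 0 0 - t 1 1) • W (sqVert 0 0) + (t 1 1 - t 0 1) • W (sqVert 0 1)
          + (t 1 1 - t 1 0) • W (sqVert 1 0) = 0 := by
        have hd := sub_eq_zero_of_eq hrel'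
        calc (t 0 0 - t 1 1) • W (sqVert 0 0) + (t 1 1 - t 0 1) • W (sqVert 0 1)
            + (t 1 1 - t 1 0) • W (sqVert 1 0)
            = t 0 0 • W (sqVert 0 0)
              + t 1 1 • (W (sqVert 0 1) + W (sqVert 1 0) - W (sqVert 0 0))
              - (t 0 1 • W (sqVert 0 1) + t 1 0 • W (sqVert 1 0)) := by module
        _ = 0 := hd
      have hco := Fintype.linearIndependent_iff.mp hli3
        ![t 0 0 - t 1 1, t 1 1 - t 0 1, t 1 1 - t 1 0] (by
          rw [Fin.sum_univ_three]
          simpa using hzero3)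
      have e0 := hco 0
      have e1 := hco 1
      have e2 := hco 2
      simp at e0 e1 e2
      have ht00 : t 0 0 = t 1 1 := by linarith
      have ht01 : t 0 1 = t 1 1 := by linarith
      have ht10 : t 1 0 = t 1 1 := by linarith
      refine ⟨t 1 1, ht 1 1, ?_⟩
      intro s hs
      refine eq_on_square_of_vertices hW'aff (hW.smul (t 1 1)) ?_ s hs
      intro a b
      show W' (sqVert a b) = t 1 1 • W (sqVert a b)
      rcases hcase a b with h | h | h | h <;>
        (rw [Prod.mk.injEq] at h) <;> obtain ⟨rfl, rfl⟩ := h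
      · rw [hteq 0 0, ht00]
      · rw [hteq 0 1, ht01]
      · rw [hteq 1 0, ht10]
      · rw [hteq 1 1]
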